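/- Let k be a field and let φ : k[[x,y,z]] → k[[s,t]] be the continuous k-algebra homomorphism of formal power series rings determined by x ↦ s², y ↦ st, z ↦ t² (i.e. the substitution homomorphism sending a power series f(x,y,z) to f(s², st, t²)). Then the kernel of φ is the principal ideal generated by xz − y²; in particular ker φ ⊆ m², where m is the maximal ideal of k[[x,y,z]]. -/

import Mathlib

open CategoryTheory

noncomputable section

/-- The Ext group `Ext_R^n(M, N)`. -/
def extGroup (R : Type) [CommRing R] (M N : ModuleCat R) (n : ℕ) : ModuleCat R :=
  ((Ext R (ModuleCat R) n).obj (Opposite.op M)).obj N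

/-- Projective dimension of a module, as an element of `ℕ∞`,
characterized by vanishing of `Ext` in higher degrees. -/
def projDim (R : Type) [CommRing R] (M : ModuleCat R) : ℕ∞ :=
  sInf {n : ℕ∞ | ∀ i : ℕ, n < (i : ℕ∞) → ∀ N : ModuleCat R, Subsingleton (extGroup R M N i)}

/-- The Tor group `Tor^R_n(M, N)`, derived in the second variable. -/
def torGroup (R : Type) [CommRing R] (M N : ModuleCat R) (n : ℕ) : ModuleCat R :=
  ((Tor (ModuleCat R) n).obj M).obj N

/-- Flat dimension of a module, as an element of `ℕ∞`,
characterized by vanishing of `Tor` in higher degrees. -/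
def flatDim (R : Type) [CommRing R] (N : ModuleCat R) : ℕ∞ :=
  sInf {n : ℕ∞ | ∀ i : ℕ, n < (i : ℕ∞) → ∀ X : ModuleCat R, Subsingleton (torGroup R X N i)}

/-- The embedding dimension of a local ring: `dim_k m/m²`. -/
def edim (A : Type) [CommRing A] [IsLocalRing A] : ℕ :=
  Module.finrank (IsLocalRing.ResidueField A) (IsLocalRing.CotangentSpace A)

/-- Depth of a module over a local ring: supremum of lengths of regular
sequences contained in the maximal ideal. -/
def sdepth (A : Type) [CommRing A] [IsLocalRing A]
    (M : Type) [AddCommGroup M] [Module A M] : ℕ∞ :=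
  sSup {n : ℕ∞ | ∃ rs : List A, (rs.length : ℕ∞) = n ∧
    (∀ x ∈ rs, x ∈ IsLocalRing.maximalIdeal A) ∧ RingTheory.Sequence.IsRegular M rs}

/-- The images of the elements of `rs` in `m/m²` are linearly independent
over the residue field. -/
def LinIndepInCotangent (A : Type) [CommRing A] [IsLocalRing A] (rs : List A) : Prop :=
  ∃ h : ∀ x ∈ rs, x ∈ IsLocalRing.maximalIdeal A,
    LinearIndependent (IsLocalRing.ResidueField A)
      fun i : Fin rs.length =>
        (IsLocalRing.maximalIdeal A).toCotangent ⟨rs.get i, h _ (List.get_mem rs i)⟩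

/-- The kernel of `φ` is generated by an `A`-regular sequence whose images in
`m_A/m_A²` are linearly independent over the residue field; i.e. `φ` is a
surjective exceptional complete intersection. -/
def IsEceKernel {A B : Type} [CommRing A] [IsLocalRing A] [CommRing B] (φ : A →+* B) : Prop :=
  ∃ rs : List A, RingTheory.Sequence.IsRegular A rs ∧ Ideal.ofList rs = RingHom.ker φ ∧
    LinIndepInCotangent A rs

end

noncomputable section

/-- The Krull dimension of a ring, as an element of `WithBot ℕ∞`. -/
def kdim (R : Type) [CommRing R] : WithBot ℕ∞ := ringKrullDim R

/-- A Noetherian local ring is regular if its Krull dimension equals its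
embedding dimension. -/
def IsRegularLocal (R : Type) [CommRing R] [IsLocalRing R] : Prop :=
  IsNoetherianRing R ∧ kdim R = (edim R : WithBot ℕ∞)

end

namespace Stmt17Aux

open MvPowerSeries Finsupp Finset



variable {k : Type} [Field k] {σ : Type}

lemma deg_add (a b : σ →₀ ℕ) : (a + b).degree = a.degree + b.degree := by
  simp only [Finsupp.degree_eq_weight_one, map_add]

/-- The ideal of power series whose coefficients below total degree `K` vanish. -/
def JId (σ : Type) (k : Type) [Field k] (K : ℕ) : Ideal (MvPowerSeries σ k) where
  carrier := {f | ∀ d : σ →₀ ℕ, d.degree < K → coeff d f = 0}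
  zero_mem' := fun d _ => map_zero _
  add_mem' := fun hf hg d hd => by
    rw [map_add, hf d hd, hg d hd, add_zero]
  smul_mem' := fun c f hf d hd => by
    classical
    rw [smul_eq_mul, coeff_mul]
    refine Finset.sum_eq_zero fun p hp => ?_
    rw [Finset.HasAntidiagonal.mem_antidiagonal] at hp
    rw [hf p.2 ?_, mul_zero]
    calc p.2.degree ≤ p.1.degree + p.2.degree := Nat.le_add_left _ _
      _ = d.degree := by rw [← deg_add, hp]
      _ < K := hd

lemma mem_JId {K : ℕ} {f : MvPowerSeries σ k} :
    f ∈ JId σ k K ↔ ∀ d : σ →₀ ℕ, d.degree < K → coeff d f = 0 := Iff.rfl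

lemma mul_mem_JId {K L : ℕ} {f g : MvPowerSeries σ k} (hf : f ∈ JId σ k K)
    (hg : g ∈ JId σ k L) : f * g ∈ JId σ k (K + L) := by
  classical
  intro d hd
  rw [coeff_mul]
  refine Finset.sum_eq_zero fun p hp => ?_
  rw [Finset.HasAntidiagonal.mem_antidiagonal] at hp
  have hsum : p.1.degree + p.2.degree = d.degree := by rw [← deg_add, hp]
  rcases lt_or_ge p.1.degree K with h1 | h1
  · rw [hf p.1 h1, zero_mul]
  · rw [hg p.2 (by omega), mul_zero]

lemma mem_maximalIdeal_iff {f : MvPowerSeries σ k} :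
    f ∈ IsLocalRing.maximalIdeal (MvPowerSeries σ k) ↔ constantCoeff f = 0 := by
  rw [IsLocalRing.mem_maximalIdeal, mem_nonunits_iff, MvPowerSeries.isUnit_iff_constantCoeff,
    isUnit_iff_ne_zero, not_ne_iff]

lemma maximalIdeal_le_JId_one :
    IsLocalRing.maximalIdeal (MvPowerSeries σ k) ≤ JId σ k 1 := by
  intro f hf d hd
  have hd0 : d = 0 := by
    rwa [Nat.lt_one_iff, Finsupp.degree_eq_zero_iff] at hd
  rw [hd0]
  exact (mem_maximalIdeal_iff.mp hf :)

lemma pow_maximalIdeal_le_JId (K : ℕ) :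
    (IsLocalRing.maximalIdeal (MvPowerSeries σ k)) ^ K ≤ JId σ k K := by
  induction K with
  | zero => intro f _ d hd; omega
  | succ K ih =>
      rw [pow_succ]
      refine Ideal.mul_le.mpr fun f hf g hg => ?_
      exact mul_mem_JId (ih hf) (maximalIdeal_le_JId_one hg)






/-- select an index in the support of `d` (or 0). -/
noncomputable def sel (d : Fin 3 →₀ ℕ) : Fin 3 :=
  if h : d.support.Nonempty then d.support.min' h else 0

lemma sel_spec {d : Fin 3 →₀ ℕ} (hd : d ≠ 0) : d (sel d) ≠ 0 := by
  have h : d.support.Nonempty := Finsupp.support_nonempty_iff.mpr hd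
  rw [sel, dif_pos h]
  exact Finsupp.mem_support_iff.mp (d.support.min'_mem h)

/-- `i`-th part of the decomposition `f = ∑ X i * gpart f i`. -/
noncomputable def gpart (f : MvPowerSeries (Fin 3) k) (i : Fin 3) : MvPowerSeries (Fin 3) k :=
  fun e => if sel (e + Finsupp.single i 1) = i then f (e + Finsupp.single i 1) else 0

lemma coeff_gpart (f : MvPowerSeries (Fin 3) k) (i : Fin 3) (e : Fin 3 →₀ ℕ) :
    coeff e (gpart f i) =
      if sel (e + Finsupp.single i 1) = i then coeff (e + Finsupp.single i 1) f else 0 := rfl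

lemma decomp {f : MvPowerSeries (Fin 3) k} (hf : constantCoeff f = 0) :
    f = ∑ i : Fin 3, X i * gpart f i := by
  classical
  ext d
  rw [map_sum]
  have hXmul : ∀ (i : Fin 3) (g : MvPowerSeries (Fin 3) k),
      coeff d (X i * g) = if Finsupp.single i 1 ≤ d then coeff (d - Finsupp.single i 1) g
        else 0 := by
    intro i g
    rw [MvPowerSeries.X, coeff_monomial_mul]
    simp
  rcases eq_or_ne d 0 with rfl | hd
  · rw [show coeff 0 f = constantCoeff f from rfl, hf]
    refine (Finset.sum_eq_zero fun i _ => ?_).symm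
    rw [hXmul, if_neg]
    rw [Finsupp.single_le_iff]
    simp
  · set j := sel d with hj
    have hdj : d j ≠ 0 := sel_spec hd
    rw [Finset.sum_eq_single j]
    · rw [hXmul, if_pos (Finsupp.single_le_iff.mpr (by omega))]
      rw [coeff_gpart, tsub_add_cancel_of_le (Finsupp.single_le_iff.mpr (by omega)), if_pos hj.symm]
    · intro i _ hij
      rw [hXmul]
      split_ifs with hle
      · rw [coeff_gpart, tsub_add_cancel_of_le hle, if_neg fun h => hij h.symm]
      · rfl
    · intro h; exact absurd (Finset.mem_univ j) h

lemma degree_add_single (e : Fin 3 →₀ ℕ) (i : Fin 3) :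
    (e + Finsupp.single i 1).degree = e.degree + 1 := by
  rw [deg_add]
  congr 1
  exact Finsupp.degree_single i 1

lemma X_mem_maximalIdeal (i : Fin 3) :
    (X i : MvPowerSeries (Fin 3) k) ∈ IsLocalRing.maximalIdeal (MvPowerSeries (Fin 3) k) := by
  rw [IsLocalRing.mem_maximalIdeal, mem_nonunits_iff, MvPowerSeries.isUnit_iff_constantCoeff,
    constantCoeff_X]
  simp

lemma mem_pow_of_low_coeff_zero :
    ∀ (K : ℕ) (f : MvPowerSeries (Fin 3) k),
    (∀ d : Fin 3 →₀ ℕ, d.degree < K → coeff d f = 0) →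
    f ∈ (IsLocalRing.maximalIdeal (MvPowerSeries (Fin 3) k)) ^ K := by
  intro K
  induction K with
  | zero => intro f _; simp
  | succ K ih =>
      intro f hf
      have h0 : constantCoeff f = 0 := hf 0 (by simp [map_zero])
      rw [decomp h0, pow_succ']
      refine Ideal.sum_mem _ fun i _ => ?_
      refine Ideal.mul_mem_mul (X_mem_maximalIdeal i) (ih _ fun e he => ?_)
      rw [coeff_gpart]
      split_ifs with h
      · exact hf _ (by rw [degree_add_single]; omega)
      · rfl





noncomputable def t3 (a b c : ℕ) : Fin 3 →₀ ℕ :=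
  Finsupp.single 0 a + Finsupp.single 1 b + Finsupp.single 2 c

noncomputable def t2 (a b : ℕ) : Fin 2 →₀ ℕ := Finsupp.single 0 a + Finsupp.single 1 b

@[simp] lemma t3_apply0 (a b c : ℕ) : t3 a b c 0 = a := by
  simp [t3, Finsupp.single_apply]
@[simp] lemma t3_apply1 (a b c : ℕ) : t3 a b c 1 = b := by
  simp [t3, Finsupp.single_apply]
@[simp] lemma t3_apply2 (a b c : ℕ) : t3 a b c 2 = c := by
  simp [t3, Finsupp.single_apply]
@[simp] lemma t2_apply0 (a b : ℕ) : t2 a b 0 = a := by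
  simp [t2, Finsupp.single_apply]
@[simp] lemma t2_apply1 (a b : ℕ) : t2 a b 1 = b := by
  simp [t2, Finsupp.single_apply]

lemma t3_eta (d : Fin 3 →₀ ℕ) : t3 (d 0) (d 1) (d 2) = d := by
  ext s; fin_cases s <;> simp

lemma t3_le_iff {a b c : ℕ} {d : Fin 3 →₀ ℕ} :
    t3 a b c ≤ d ↔ a ≤ d 0 ∧ b ≤ d 1 ∧ c ≤ d 2 := by
  constructor
  · intro h
    exact ⟨by simpa using h 0, by simpa using h 1, by simpa using h 2⟩
  · rintro ⟨h0, h1, h2⟩ i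
    fin_cases i <;> simpa

lemma tsub_t3_apply (d : Fin 3 →₀ ℕ) (a b c : ℕ) (i : Fin 3) :
    (d - t3 a b c) i = d i - (t3 a b c) i := Finsupp.tsub_apply d _ i

lemma degree_eq_sum3 (d : Fin 3 →₀ ℕ) : d.degree = d 0 + d 1 + d 2 := by
  rw [show d 0 + d 1 + d 2 = ∑ i : Fin 3, d i by simp [Fin.sum_univ_three]]
  exact Finset.sum_subset (Finset.subset_univ _) (by
    intro i _ hi
    simpa using Finsupp.notMem_support_iff.mp hi)

lemma degree_eq_sum2 (d : Fin 2 →₀ ℕ) : d.degree = d 0 + d 1 := by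
  rw [show d 0 + d 1 = ∑ i : Fin 2, d i by simp [Fin.sum_univ_two]]
  exact Finset.sum_subset (Finset.subset_univ _) (by
    intro i _ hi
    simpa using Finsupp.notMem_support_iff.mp hi)

/-- bound for the truncation Finset -/
noncomputable def bnd (K : ℕ) : Fin 3 →₀ ℕ := Finsupp.equivFunOnFinite.symm fun _ => K

noncomputable def SK (K : ℕ) : Finset (Fin 3 →₀ ℕ) :=
  (Finset.Iic (bnd K)).filter fun d => d.degree < K

lemma mem_SK {K : ℕ} {d : Fin 3 →₀ ℕ} : d ∈ SK K ↔ d.degree < K := by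
  rw [SK, Finset.mem_filter, Finset.mem_Iic, and_iff_right_iff_imp]
  intro hd i
  have := Finsupp.le_degree i d
  have : bnd K i = K := rfl
  omega

noncomputable def PK (K : ℕ) (f : MvPowerSeries (Fin 3) k) : MvPowerSeries (Fin 3) k :=
  ∑ d ∈ SK K, monomial d (coeff d f)

lemma coeff_PK (K : ℕ) (f : MvPowerSeries (Fin 3) k) (e : Fin 3 →₀ ℕ) :
    coeff e (PK K f) = if e ∈ SK K then coeff e f else 0 := by
  classical
  rw [PK, map_sum]
  rw [Finset.sum_congr rfl fun d _ => coeff_monomial e d _]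
  exact Finset.sum_ite_eq (SK K) e fun d => coeff d f

lemma monomial_eq (d : Fin 3 →₀ ℕ) (a : k) :
    (monomial d a : MvPowerSeries (Fin 3) k) =
      C a * (X 0 ^ d 0 * X 1 ^ d 1 * X 2 ^ d 2) := by
  rw [X_pow_eq, X_pow_eq, X_pow_eq, monomial_mul_monomial, monomial_mul_monomial]
  rw [show (C a : MvPowerSeries (Fin 3) k) = monomial 0 a from rfl,
    monomial_mul_monomial]
  rw [one_mul, one_mul, mul_one, zero_add]
  rw [show ((Finsupp.single (0:Fin 3) (d 0) + Finsupp.single 1 (d 1)) + Finsupp.single 2 (d 2)) = t3 (d 0) (d 1) (d 2) from rfl, t3_eta]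

section Phi

variable (φ : MvPowerSeries (Fin 3) k →ₐ[k] MvPowerSeries (Fin 2) k)
  (hx : φ (MvPowerSeries.X 0) = MvPowerSeries.X 0 ^ 2)
  (hy : φ (MvPowerSeries.X 1) = MvPowerSeries.X 0 * MvPowerSeries.X 1)
  (hz : φ (MvPowerSeries.X 2) = MvPowerSeries.X 1 ^ 2)

include hx hy hz

lemma phi_monomial (d : Fin 3 →₀ ℕ) (a : k) :
    φ (monomial d a) = monomial (t2 (2 * d 0 + d 1) (d 1 + 2 * d 2)) a := by
  rw [monomial_eq, map_mul, map_mul, map_mul, map_pow, map_pow, map_pow, hx, hy, hz]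
  have hC : φ (C a) = C a := by
    rw [c_eq_algebraMap, c_eq_algebraMap]
    exact φ.commutes a
  rw [hC]
  have : ((X 0 ^ 2 : MvPowerSeries (Fin 2) k) ^ d 0 * (X 0 * X 1) ^ d 1 * (X 1 ^ 2) ^ d 2)
      = X 0 ^ (2 * d 0 + d 1) * X 1 ^ (d 1 + 2 * d 2) := by
    ring
  rw [this, X_pow_eq, X_pow_eq, monomial_mul_monomial,
    show ((C a : MvPowerSeries (Fin 2) k) = monomial 0 a) from rfl,
    monomial_mul_monomial, one_mul, mul_one, zero_add]
  rfl

lemma phiX_mem (i : Fin 3) :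
    φ (X i) ∈ IsLocalRing.maximalIdeal (MvPowerSeries (Fin 2) k) := by
  rw [mem_maximalIdeal_iff]
  fin_cases i
  · rw [show X ((fun i => i) (⟨0, by omega⟩ : Fin 3)) = (X 0 : MvPowerSeries (Fin 3) k) from rfl,
      hx, map_pow, constantCoeff_X]; simp
  · rw [show X ((fun i => i) (⟨1, by omega⟩ : Fin 3)) = (X 1 : MvPowerSeries (Fin 3) k) from rfl,
      hy, map_mul, constantCoeff_X]; simp
  · rw [show X ((fun i => i) (⟨2, by omega⟩ : Fin 3)) = (X 2 : MvPowerSeries (Fin 3) k) from rfl,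
      hz, map_pow, constantCoeff_X]; simp

lemma map_maximalIdeal_le :
    Ideal.map (φ : MvPowerSeries (Fin 3) k →+* MvPowerSeries (Fin 2) k)
        (IsLocalRing.maximalIdeal (MvPowerSeries (Fin 3) k)) ≤
      IsLocalRing.maximalIdeal (MvPowerSeries (Fin 2) k) := by
  rw [Ideal.map_le_iff_le_comap]
  intro f hf
  rw [Ideal.mem_comap]
  have h0 : constantCoeff f = 0 := mem_maximalIdeal_iff.mp hf
  rw [decomp h0, map_sum]
  refine Ideal.sum_mem _ fun i _ => ?_
  rw [map_mul]
  exact Ideal.mul_mem_right _ _ (phiX_mem φ hx hy hz i)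

lemma coeff_phi_of_mem_pow {f : MvPowerSeries (Fin 3) k} {K : ℕ}
    (hf : f ∈ (IsLocalRing.maximalIdeal (MvPowerSeries (Fin 3) k)) ^ K)
    {E : Fin 2 →₀ ℕ} (hE : E.degree < K) : coeff E (φ f) = 0 := by
  have h1 : φ f ∈ (IsLocalRing.maximalIdeal (MvPowerSeries (Fin 2) k)) ^ K := by
    have := Ideal.mem_map_of_mem
      (φ : MvPowerSeries (Fin 3) k →+* MvPowerSeries (Fin 2) k) hf
    rw [Ideal.map_pow] at this
    exact Ideal.pow_right_mono (map_maximalIdeal_le φ hx hy hz) K this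
  exact pow_maximalIdeal_le_JId K h1 E hE

/-- Main formula: the coefficient of `φ g` as a finite sum of coefficients of `g`. -/
lemma coeff_phi (g : MvPowerSeries (Fin 3) k) (E : Fin 2 →₀ ℕ) :
    coeff E (φ g) =
      ∑ d ∈ SK (E.degree + 1),
        if E = t2 (2 * d 0 + d 1) (d 1 + 2 * d 2) then coeff d g else 0 := by
  classical
  set K := E.degree + 1 with hK
  have hsplit : g = PK K g + (g - PK K g) := by ring
  have htail : g - PK K g ∈ (IsLocalRing.maximalIdeal (MvPowerSeries (Fin 3) k)) ^ K := by
    refine mem_pow_of_low_coeff_zero K _ fun d hd => ?_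
    rw [map_sub, coeff_PK, if_pos (mem_SK.mpr hd), sub_self]
  calc coeff E (φ g) = coeff E (φ (PK K g)) + coeff E (φ (g - PK K g)) := by
        rw [← map_add, ← map_add, ← hsplit]
    _ = coeff E (φ (PK K g)) := by
        rw [coeff_phi_of_mem_pow φ hx hy hz htail (by omega), add_zero]
    _ = _ := by
        rw [PK, map_sum, map_sum]
        refine Finset.sum_congr rfl fun d _ => ?_
        rw [phi_monomial φ hx hy hz, coeff_monomial]

end Phi


/-- explicit quotient upon division by `y² - xz`. -/
noncomputable def qs (f : MvPowerSeries (Fin 3) k) : MvPowerSeries (Fin 3) k :=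
  fun d => ∑ u ∈ Finset.range (min (d 0) (d 2) + 1),
    coeff (t3 (d 0 - u) (d 1 + 2 + 2 * u) (d 2 - u)) f

lemma coeff_qs (f : MvPowerSeries (Fin 3) k) (e : Fin 3 →₀ ℕ) :
    coeff e (qs f) = ∑ u ∈ Finset.range (min (e 0) (e 2) + 1),
      coeff (t3 (e 0 - u) (e 1 + 2 + 2 * u) (e 2 - u)) f := rfl

lemma sum_shift (F : ℕ → ℕ → ℕ → k) (i j l : ℕ) (hi : 1 ≤ i) (hl : 1 ≤ l) :
    ∑ u ∈ Finset.range (min i l + 1), F (i - u) (j + 2 * u) (l - u)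
      = F i j l + ∑ u ∈ Finset.range (min (i - 1) (l - 1) + 1),
          F (i - 1 - u) (j + 2 + 2 * u) (l - 1 - u) := by
  have hmin : min i l + 1 = (min (i - 1) (l - 1) + 1) + 1 := by omega
  rw [hmin, Finset.sum_range_succ', add_comm (F i j l)]
  congr 1
  · refine Finset.sum_congr rfl fun u _ => ?_
    have h1 : i - (u + 1) = i - 1 - u := by omega
    have h2 : j + 2 * (u + 1) = j + 2 + 2 * u := by omega
    have h3 : l - (u + 1) = l - 1 - u := by omega
    rw [h1, h2, h3]

lemma coeff_mul_qs (f : MvPowerSeries (Fin 3) k) (d : Fin 3 →₀ ℕ) (hd : 2 ≤ d 1) :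
    coeff d ((X 1 ^ 2 - X 0 * X 2) * qs f) = coeff d f := by
  have hY : (X 1 ^ 2 : MvPowerSeries (Fin 3) k) = monomial (t3 0 2 0) 1 := by
    have h : (Finsupp.single (1 : Fin 3) 2) = t3 0 2 0 := by
      ext s; fin_cases s <;> simp [t3, Finsupp.single_apply]
    rw [X_pow_eq, h]
  have hXZ : (X 0 * X 2 : MvPowerSeries (Fin 3) k) = monomial (t3 1 0 1) 1 := by
    have h : (Finsupp.single (0 : Fin 3) 1 + Finsupp.single 2 1) = t3 1 0 1 := by
      ext s; fin_cases s <;> simp [t3, Finsupp.single_apply]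
    rw [MvPowerSeries.X, MvPowerSeries.X, monomial_mul_monomial, one_mul, h]
  rw [sub_mul, map_sub, hY, hXZ, coeff_monomial_mul, coeff_monomial_mul,
    if_pos (t3_le_iff.mpr ⟨Nat.zero_le _, by simpa using hd, Nat.zero_le _⟩), one_mul]
  have hq1 : coeff (d - t3 0 2 0) (qs f) =
      ∑ u ∈ Finset.range (min (d 0) (d 2) + 1),
        coeff (t3 (d 0 - u) (d 1 + 2 * u) (d 2 - u)) f := by
    rw [coeff_qs]
    have e0 : (d - t3 0 2 0) 0 = d 0 := by rw [tsub_t3_apply]; simp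
    have e1 : (d - t3 0 2 0) 1 = d 1 - 2 := by rw [tsub_t3_apply]; simp
    have e2 : (d - t3 0 2 0) 2 = d 2 := by rw [tsub_t3_apply]; simp
    rw [e0, e1, e2]
    refine Finset.sum_congr rfl fun u _ => ?_
    have : d 1 - 2 + 2 + 2 * u = d 1 + 2 * u := by omega
    rw [this]
  rw [hq1]
  by_cases hil : 1 ≤ d 0 ∧ 1 ≤ d 2
  · rw [if_pos (t3_le_iff.mpr ⟨hil.1, Nat.zero_le _, hil.2⟩), one_mul]
    have hq2 : coeff (d - t3 1 0 1) (qs f) =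
        ∑ u ∈ Finset.range (min (d 0 - 1) (d 2 - 1) + 1),
          coeff (t3 (d 0 - 1 - u) (d 1 + 2 + 2 * u) (d 2 - 1 - u)) f := by
      rw [coeff_qs]
      have e0 : (d - t3 1 0 1) 0 = d 0 - 1 := by rw [tsub_t3_apply]; simp
      have e1 : (d - t3 1 0 1) 1 = d 1 := by rw [tsub_t3_apply]; simp
      have e2 : (d - t3 1 0 1) 2 = d 2 - 1 := by rw [tsub_t3_apply]; simp
      rw [e0, e1, e2]
    rw [hq2, sum_shift (fun a b c => coeff (t3 a b c) f) (d 0) (d 1) (d 2) hil.1 hil.2]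
    rw [add_sub_cancel_right, t3_eta]
  · rw [if_neg (fun h => hil ⟨(t3_le_iff.mp h).1, (t3_le_iff.mp h).2.2⟩), sub_zero]
    have hmin : min (d 0) (d 2) = 0 := by omega
    rw [hmin, Finset.sum_range_one, Nat.sub_zero, Nat.sub_zero, Nat.mul_zero, Nat.add_zero,
      t3_eta]

end Stmt17Aux


/-- Example 2.14: the kernel of the substitution homomorphism
`k[[x,y,z]] → k[[s,t]]`, `x ↦ s²`, `y ↦ st`, `z ↦ t²`, is `(xz - y²) ⊆ m²`.
(Any `k`-algebra homomorphism of these power series rings is uniquely determined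
by the images of the variables, so it is quantified universally.) -/
theorem statement_17 (k : Type) [Field k]
    (φ : MvPowerSeries (Fin 3) k →ₐ[k] MvPowerSeries (Fin 2) k)
    (hx : φ (MvPowerSeries.X 0) = MvPowerSeries.X 0 ^ 2)
    (hy : φ (MvPowerSeries.X 1) = MvPowerSeries.X 0 * MvPowerSeries.X 1)
    (hz : φ (MvPowerSeries.X 2) = MvPowerSeries.X 1 ^ 2) :
    RingHom.ker φ =
      Ideal.span {(MvPowerSeries.X 0 * MvPowerSeries.X 2 - MvPowerSeries.X 1 ^ 2 :
        MvPowerSeries (Fin 3) k)} ∧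
    RingHom.ker φ ≤ (IsLocalRing.maximalIdeal (MvPowerSeries (Fin 3) k)) ^ 2 := by
  classical
  open MvPowerSeries in
  have hgen : φ (X 0 * X 2 - X 1 ^ 2) = 0 := by
    rw [map_sub, map_mul, map_pow, hx, hy, hz]; ring
  have hker : RingHom.ker φ = Ideal.span {(MvPowerSeries.X 0 * MvPowerSeries.X 2 -
      MvPowerSeries.X 1 ^ 2 : MvPowerSeries (Fin 3) k)} := by
    apply le_antisymm
    · intro f hf
      have hφf : φ f = 0 := hf
      set r : MvPowerSeries (Fin 3) k :=
        f - (MvPowerSeries.X 1 ^ 2 - MvPowerSeries.X 0 * MvPowerSeries.X 2) * Stmt17Aux.qs f with hr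
      have hr0 : ∀ d : Fin 3 →₀ ℕ, 2 ≤ d 1 → MvPowerSeries.coeff d r = 0 := fun d hd => by
        rw [hr, map_sub, Stmt17Aux.coeff_mul_qs f d hd, sub_self]
      have hφr : φ r = 0 := by
        rw [hr, map_sub, map_mul, hφf, show φ (MvPowerSeries.X 1 ^ 2 -
          MvPowerSeries.X 0 * MvPowerSeries.X 2) = 0 from by
            rw [map_sub, map_pow, map_mul, hx, hy, hz]; ring,
          zero_mul, sub_zero]
      have hrzero : r = 0 := by
        ext d
        rw [map_zero]
        rcases le_or_gt 2 (d 1) with h | h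
        · exact hr0 d h
        · have h0 : MvPowerSeries.coeff (Stmt17Aux.t2 (2 * d 0 + d 1) (d 1 + 2 * d 2)) (φ r) = 0 := by
            rw [hφr, map_zero]
          rw [Stmt17Aux.coeff_phi φ hx hy hz r] at h0
          have hmem : d ∈ Stmt17Aux.SK (Finsupp.degree (Stmt17Aux.t2 (2 * d 0 + d 1) (d 1 + 2 * d 2)) + 1) := by
            refine Stmt17Aux.mem_SK.mpr ?_
            rw [Stmt17Aux.degree_eq_sum2, Stmt17Aux.t2_apply0, Stmt17Aux.t2_apply1, Stmt17Aux.degree_eq_sum3]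
            omega
          have hrest : ∀ d' ∈ Stmt17Aux.SK (Finsupp.degree (Stmt17Aux.t2 (2 * d 0 + d 1) (d 1 + 2 * d 2)) + 1),
              d' ≠ d → (if Stmt17Aux.t2 (2 * d 0 + d 1) (d 1 + 2 * d 2) =
                Stmt17Aux.t2 (2 * d' 0 + d' 1) (d' 1 + 2 * d' 2) then MvPowerSeries.coeff d' r else 0)
                  = 0 := by
            intro d' _ hne
            split_ifs with hE
            · have c1 : 2 * d 0 + d 1 = 2 * d' 0 + d' 1 := by
                have := congrArg (fun g : Fin 2 →₀ ℕ => g 0) hE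
                simpa using this
              have c2 : d 1 + 2 * d 2 = d' 1 + 2 * d' 2 := by
                have := congrArg (fun g : Fin 2 →₀ ℕ => g 1) hE
                simpa using this
              rcases le_or_gt 2 (d' 1) with h' | h'
              · exact hr0 d' h'
              · exfalso
                apply hne
                have e0 : d' 0 = d 0 := by omega
                have e1 : d' 1 = d 1 := by omega
                have e2 : d' 2 = d 2 := by omega
                rw [← Stmt17Aux.t3_eta d', ← Stmt17Aux.t3_eta d, e0, e1, e2]
            · rfl
          rw [Finset.sum_eq_single_of_mem d hmem hrest, if_pos rfl] at h0
          exact h0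
      have hfq : f = (MvPowerSeries.X 1 ^ 2 - MvPowerSeries.X 0 * MvPowerSeries.X 2) * Stmt17Aux.qs f :=
        sub_eq_zero.mp hrzero
      rw [Ideal.mem_span_singleton]
      exact ⟨-Stmt17Aux.qs f, by linear_combination hfq⟩
    · rw [Ideal.span_le]
      intro x hx'
      rw [Set.mem_singleton_iff] at hx'
      subst hx'
      exact hgen
  refine ⟨hker, ?_⟩
  rw [hker, Ideal.span_le]
  intro x hx'
  rw [Set.mem_singleton_iff] at hx'
  subst hx'
  rw [SetLike.mem_coe, pow_two]
  exact sub_mem (Ideal.mul_mem_mul (Stmt17Aux.X_mem_maximalIdeal 0) (Stmt17Aux.X_mem_maximalIdeal 2))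
    (by rw [sq]; exact Ideal.mul_mem_mul (Stmt17Aux.X_mem_maximalIdeal 1) (Stmt17Aux.X_mem_maximalIdeal 1))
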